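/- arXiv:2009.05464 — 6 statements merged into one kernel-verified Lean document; each statement's English description precedes it below -/
import Mathlib

section
/- Let n ≥ 2 and let F : ℝⁿ → ℝⁿ be a C¹ map. Suppose that 0 ∉ Spec(F) (i.e., for every x ∈ ℝⁿ no complex eigenvalue of JF(x) is zero) and that there exists ε > 0 such that either Spec(F+F^T) ⊆ (ε, +∞) (every eigenvalue of JF(x)+JF(x)^T is greater than ε for every x) or Spec(F+F^T) ⊆ (−∞, −ε) (every eigenvalue of JF(x)+JF(x)^T is less than −ε for every x). Then F is injective. -/
open Matrix

/-- The Jacobian matrix of a map `F : ℝⁿ → ℝⁿ` at a point `x`: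
the matrix of the total (Fréchet) derivative of `F` at `x` in the standard basis. -/
noncomputable def jacobianMatrix {n : ℕ} (F : (Fin n → ℝ) → (Fin n → ℝ)) (x : Fin n → ℝ) :
    Matrix (Fin n) (Fin n) ℝ :=
  LinearMap.toMatrix' (fderiv ℝ F x).toLinearMap

/-- `μ : ℂ` is a (complex) eigenvalue of the real matrix `A`. -/
def HasComplexEigenvalue {n : ℕ} (A : Matrix (Fin n) (Fin n) ℝ) (μ : ℂ) : Prop :=
  ∃ v : Fin n → ℂ, v ≠ 0 ∧ (A.map Complex.ofReal).mulVec v = μ • v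

/-- `μ : ℝ` is a (real) eigenvalue of the real matrix `A`. -/
def HasRealEigenvalue {n : ℕ} (A : Matrix (Fin n) (Fin n) ℝ) (μ : ℝ) : Prop :=
  ∃ v : Fin n → ℝ, v ≠ 0 ∧ A.mulVec v = μ • v

lemma quad_lower {n : ℕ} (A : Matrix (Fin n) (Fin n) ℝ) (hA : A.IsHermitian) (ε : ℝ)
    (h : ∀ μ : ℝ, HasRealEigenvalue A μ → ε ≤ μ) (v : Fin n → ℝ) :
    ε * (v ⬝ᵥ v) ≤ v ⬝ᵥ (A *ᵥ v) := by
  set b := hA.eigenvectorBasis with hb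
  have heig : ∀ i, ε ≤ hA.eigenvalues i := fun i =>
    h _ ⟨b i, by simpa using b.orthonormal.ne_zero i, hA.mulVec_eigenvectorBasis i⟩
  have hAT : Aᵀ = A := by
    rw [← Matrix.conjTranspose_eq_transpose_of_trivial]; exact hA.eq
  set w : EuclideanSpace ℝ (Fin n) := WithLp.toLp 2 v with hw
  have hinner : ∀ x y : EuclideanSpace ℝ (Fin n),
      (inner ℝ x y : ℝ) = (x : Fin n → ℝ) ⬝ᵥ (y : Fin n → ℝ) := by
    intro x y
    rw [EuclideanSpace.inner_eq_star_dotProduct]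
    rw [star_trivial, dotProduct_comm]
  have h2 : ∀ i, (inner ℝ (b i) (WithLp.toLp 2 (A *ᵥ v)) : ℝ)
      = hA.eigenvalues i * (inner ℝ (b i) w : ℝ) := by
    intro i
    have hu : A *ᵥ (b i : Fin n → ℝ) = hA.eigenvalues i • (b i : Fin n → ℝ) :=
      hA.mulVec_eigenvectorBasis i
    rw [hinner, hinner]
    calc (b i : Fin n → ℝ) ⬝ᵥ (A *ᵥ v) = (Aᵀ *ᵥ (b i : Fin n → ℝ)) ⬝ᵥ v := by
          rw [dotProduct_mulVec, ← mulVec_transpose]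
      _ = (A *ᵥ (b i : Fin n → ℝ)) ⬝ᵥ v := by rw [hAT]
      _ = hA.eigenvalues i * ((b i : Fin n → ℝ) ⬝ᵥ v) := by
          rw [hu, smul_dotProduct]; rfl
  have key : v ⬝ᵥ (A *ᵥ v) = ∑ i, hA.eigenvalues i * ((inner ℝ (b i) w : ℝ))^2 := by
    have h1 : (inner ℝ w (WithLp.toLp 2 (A *ᵥ v)) : ℝ)
        = ∑ i, (inner ℝ w (b i) : ℝ) * (inner ℝ (b i) (WithLp.toLp 2 (A *ᵥ v)) : ℝ) :=
      (b.sum_inner_mul_inner _ _).symm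
    rw [hinner] at h1
    rw [h1]
    refine Finset.sum_congr rfl fun i _ => ?_
    rw [h2 i, real_inner_comm w (b i)]
    ring
  have hvv : (inner ℝ w w : ℝ) = ∑ i, ((inner ℝ (b i) w : ℝ))^2 := by
    have := (b.sum_inner_mul_inner w w).symm
    rw [this]
    refine Finset.sum_congr rfl fun i _ => ?_
    rw [real_inner_comm w (b i)]; ring
  rw [key]
  have : ε * (v ⬝ᵥ v) = ∑ i, ε * ((inner ℝ (b i) w : ℝ))^2 := by
    rw [← Finset.mul_sum, ← hvv, hinner]
  rw [this]
  exact Finset.sum_le_sum fun i _ => mul_le_mul_of_nonneg_right (heig i) (sq_nonneg _)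

/-- If `F : ℝⁿ → ℝⁿ` (n ≥ 2) is `C¹`, no complex eigenvalue of `JF(x)` is zero
for any `x`, and there is `ε > 0` such that either every eigenvalue of `JF(x)+JF(x)ᵀ` is
greater than `ε` for every `x`, or every eigenvalue of `JF(x)+JF(x)ᵀ` is less than `-ε`
for every `x`, then `F` is injective. -/
theorem injective_of_nonzero_spec_and_symmetric_spec_bounded_away
    {n : ℕ} (hn : 2 ≤ n) (F : (Fin n → ℝ) → (Fin n → ℝ)) (hF : ContDiff ℝ 1 F)
    (hspec : ∀ x : Fin n → ℝ, ∀ μ : ℂ, HasComplexEigenvalue (jacobianMatrix F x) μ → μ ≠ 0)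
    (hsym : ∃ ε > (0 : ℝ),
      (∀ x : Fin n → ℝ, ∀ μ : ℝ,
          HasRealEigenvalue (jacobianMatrix F x + (jacobianMatrix F x)ᵀ) μ → ε < μ) ∨
      (∀ x : Fin n → ℝ, ∀ μ : ℝ,
          HasRealEigenvalue (jacobianMatrix F x + (jacobianMatrix F x)ᵀ) μ → μ < -ε)) :
    Function.Injective F := by
  obtain ⟨ε, hε, hcase⟩ := hsym
  have hdiff : Differentiable ℝ F := hF.differentiable one_ne_zero
  have hJ : ∀ (x v : Fin n → ℝ), (jacobianMatrix F x) *ᵥ v = fderiv ℝ F x v := by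
    intro x v
    have : Matrix.toLin' (jacobianMatrix F x) = (fderiv ℝ F x).toLinearMap :=
      Matrix.toLin'_toMatrix' _
    rw [← Matrix.toLin'_apply, this]; rfl
  -- the symmetric matrix
  set M : (Fin n → ℝ) → Matrix (Fin n) (Fin n) ℝ :=
    fun x => jacobianMatrix F x + (jacobianMatrix F x)ᵀ with hM
  have hMherm : ∀ x, (M x).IsHermitian := by
    intro x
    rw [Matrix.IsHermitian, Matrix.conjTranspose_eq_transpose_of_trivial, hM]
    rw [Matrix.transpose_add, Matrix.transpose_transpose, add_comm]
  have hquadM : ∀ (x v : Fin n → ℝ), v ⬝ᵥ ((M x) *ᵥ v) = 2 * (v ⬝ᵥ (fderiv ℝ F x v)) := by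
    intro x v
    rw [hM]
    rw [Matrix.add_mulVec, dotProduct_add]
    have h1 : v ⬝ᵥ ((jacobianMatrix F x)ᵀ *ᵥ v) = v ⬝ᵥ ((jacobianMatrix F x) *ᵥ v) := by
      rw [Matrix.mulVec_transpose, dotProduct_comm, ← dotProduct_mulVec]
    rw [h1, hJ]
    ring
  intro a b hab
  by_contra hne
  set v : Fin n → ℝ := b - a with hv
  have hvne : v ≠ 0 := sub_ne_zero_of_ne (fun h => hne (h ▸ rfl))
  have hvv : 0 < v ⬝ᵥ v := by
    have h0 : 0 ≤ v ⬝ᵥ v := by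
      simp only [dotProduct]
      exact Finset.sum_nonneg fun i _ => mul_self_nonneg _
    rcases lt_or_eq_of_le h0 with h | h
    · exact h
    · exact absurd (dotProduct_self_eq_zero.mp h.symm) hvne
  set g : ℝ → ℝ := fun t => F (a + t • v) ⬝ᵥ v with hg
  have hgderiv : ∀ t : ℝ, HasDerivAt g ((fderiv ℝ F (a + t • v) v) ⬝ᵥ v) t := by
    intro t
    have hline : HasDerivAt (fun s : ℝ => a + s • v) v t := by
      simpa using ((hasDerivAt_id t).smul_const v).const_add a
    have hcomp : HasDerivAt (fun s : ℝ => F (a + s • v)) (fderiv ℝ F (a + t • v) v) t :=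
      (hdiff (a + t • v)).hasFDerivAt.comp_hasDerivAt t hline
    have hcoord : ∀ i, HasDerivAt (fun s : ℝ => F (a + s • v) i * v i)
        ((fderiv ℝ F (a + t • v) v) i * v i) t := by
      intro i
      have := ((ContinuousLinearMap.proj (R := ℝ) (φ := fun _ : Fin n => ℝ) i).hasFDerivAt).comp_hasDerivAt t hcomp
      exact (this.mul_const (v i))
    have := HasDerivAt.fun_sum (u := Finset.univ) (fun i _ => hcoord i)
    simpa [hg, dotProduct] using this
  have hderiv_eq : ∀ t : ℝ, deriv g t = (fderiv ℝ F (a + t • v) v) ⬝ᵥ v :=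
    fun t => (hgderiv t).deriv
  have hg01 : g 0 = g 1 := by
    simp [hg, hv, hab]
  rcases hcase with hpos | hneg
  · -- strictly increasing
    have : StrictMono g := by
      refine strictMono_of_deriv_pos fun t => ?_
      rw [hderiv_eq t]
      set x := a + t • v
      have hq := quad_lower (M x) (hMherm x) ε
        (fun μ hμ => le_of_lt (hpos x μ hμ)) v
      rw [hquadM x v] at hq
      have : 0 < v ⬝ᵥ (fderiv ℝ F x v) := by nlinarith
      rwa [dotProduct_comm] at this
    exact absurd hg01 (ne_of_lt (this zero_lt_one))
  · -- strictly decreasing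
    have : StrictAnti g := by
      refine strictAnti_of_deriv_neg fun t => ?_
      rw [hderiv_eq t]
      set x := a + t • v
      have hq := quad_lower (-(M x)) (by simpa using (hMherm x).neg) ε
        (fun μ hμ => by
          obtain ⟨u, hu, huv⟩ := hμ
          have : HasRealEigenvalue (M x) (-μ) := by
            refine ⟨u, hu, ?_⟩
            have := congrArg Neg.neg huv
            simpa [Matrix.neg_mulVec, neg_smul] using this
          linarith [hneg x (-μ) this]) v
      rw [Matrix.neg_mulVec, dotProduct_neg, hquadM x v] at hq
      have : v ⬝ᵥ (fderiv ℝ F x v) < 0 := by nlinarith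
      rwa [dotProduct_comm] at this
    exact absurd hg01 (ne_of_gt (this zero_lt_one))
end

section
/- Let n ≥ 2 and let F : ℝⁿ → ℝⁿ be a C¹ map. Suppose that for every x ∈ ℝⁿ no complex eigenvalue of JF(x) is zero, and that there exists ε > 0 such that for every x ∈ ℝⁿ every eigenvalue of the real symmetric matrix JF(x)+JF(x)^T is greater than ε. Then F is injective. -/
open Matrix

lemma quad_lower_bound {n : ℕ} (S : Matrix (Fin n) (Fin n) ℝ) (hS : S.IsHermitian) (ε : ℝ)
    (h : ∀ μ : ℝ, (∃ v : Fin n → ℝ, v ≠ 0 ∧ S.mulVec v = μ • v) → ε < μ)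
    (v : Fin n → ℝ) : ε * (v ⬝ᵥ v) ≤ v ⬝ᵥ S.mulVec v := by
  have hB : (S - ε • 1).IsHermitian := by
    apply hS.sub
    simp [Matrix.IsHermitian, Matrix.conjTranspose_smul]
  have hpos : (S - ε • 1).PosSemidef := by
    apply hB.posSemidef_iff_eigenvalues_nonneg.mpr
    intro i
    have hv := hB.mulVec_eigenvectorBasis i
    have hvne : (WithLp.equiv 2 _) (hB.eigenvectorBasis i) ≠ 0 := by
      have := hB.eigenvectorBasis.orthonormal.ne_zero i
      intro hc
      apply this
      ext j; exact congrFun hc j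
    rw [Matrix.sub_mulVec, Matrix.smul_mulVec, Matrix.one_mulVec, sub_eq_iff_eq_add] at hv
    have := h _ ⟨_, hvne, hv.trans (add_smul _ _ _).symm⟩
    exact (by linarith : (0:ℝ) ≤ hB.eigenvalues i)
  have := hpos.dotProduct_mulVec_nonneg v
  simp only [Matrix.sub_mulVec, Matrix.smul_mulVec, Matrix.one_mulVec, dotProduct_sub,
    dotProduct_smul, RCLike.star_def, star_trivial] at this
  simp only [smul_eq_mul, smul_dotProduct] at this ⊢
  linarith


/-- If `F : ℝⁿ → ℝⁿ` (n ≥ 2) is `C¹`, no complex eigenvalue of `JF(x)` is zero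
for any `x`, and there is `ε > 0` such that every eigenvalue of `JF(x)+JF(x)ᵀ` is greater
than `ε` for every `x`, then `F` is injective. -/
theorem injective_of_nonzero_spec_and_symmetric_spec_gt
    {n : ℕ} (hn : 2 ≤ n) (F : (Fin n → ℝ) → (Fin n → ℝ)) (hF : ContDiff ℝ 1 F)
    (hspec : ∀ x : Fin n → ℝ, ∀ μ : ℂ, HasComplexEigenvalue (jacobianMatrix F x) μ → μ ≠ 0)
    (hsym : ∃ ε > (0 : ℝ), ∀ x : Fin n → ℝ, ∀ μ : ℝ,
        HasRealEigenvalue (jacobianMatrix F x + (jacobianMatrix F x)ᵀ) μ → ε < μ) :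
    Function.Injective F := by
  simp only [HasRealEigenvalue, jacobianMatrix] at hsym
  obtain ⟨ε, hε, hsym⟩ := hsym
  intro a b hab
  by_contra hne
  set d : Fin n → ℝ := b - a with hd
  have hdne : d ≠ 0 := sub_ne_zero.mpr (Ne.symm hne)
  -- key derivative bound
  have hJ : ∀ x : Fin n → ℝ, ε * (d ⬝ᵥ d) ≤ 2 * (d ⬝ᵥ (fderiv ℝ F x d)) := by
    intro x
    set J : Matrix (Fin n) (Fin n) ℝ := LinearMap.toMatrix' (fderiv ℝ F x).toLinearMap with hJdef
    have hmul : ∀ v : Fin n → ℝ, J.mulVec v = fderiv ℝ F x v := by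
      intro v
      rw [hJdef, ← Matrix.toLin'_apply, Matrix.toLin'_toMatrix']
      rfl
    have hherm : (J + Jᵀ).IsHermitian := by
      simp [Matrix.IsHermitian, Matrix.conjTranspose_add,
        Matrix.conjTranspose_eq_transpose_of_trivial, add_comm]
    have := quad_lower_bound (J + Jᵀ) hherm ε (hsym x) d
    have hquad : d ⬝ᵥ (J + Jᵀ).mulVec d = 2 * (d ⬝ᵥ J.mulVec d) := by
      rw [Matrix.add_mulVec, dotProduct_add, Matrix.dotProduct_mulVec d Jᵀ d,
        Matrix.vecMul_transpose, dotProduct_comm]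
      ring
    rw [hquad, hmul] at this
    exact this
  -- the scalar function
  set g : ℝ → ℝ := fun t => (F (a + t • d)) ⬝ᵥ d with hg
  have hdiff : ∀ t : ℝ, HasDerivAt g ((fderiv ℝ F (a + t • d) d) ⬝ᵥ d) t := by
    intro t
    have h1 : HasDerivAt (fun t : ℝ => a + t • d) d t := by
      simpa using ((hasDerivAt_id t).smul_const d).const_add a
    have h2 : HasFDerivAt F (fderiv ℝ F (a + t • d)) (a + t • d) :=
      (hF.differentiable one_ne_zero (a + t • d)).hasFDerivAt
    have h3 : HasDerivAt (fun t : ℝ => F (a + t • d)) (fderiv ℝ F (a + t • d) d) t :=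
      h2.comp_hasDerivAt t h1
    have h4 : HasDerivAt g (∑ i, (fderiv ℝ F (a + t • d) d i) * d i) t := by
      have : g = fun t => ∑ i, (F (a + t • d) i) * d i := by
        funext t; simp [hg, dotProduct]
      rw [this]
      apply HasDerivAt.fun_sum
      intro i _
      exact by
        have hpi : HasFDerivAt (fun v : Fin n → ℝ => v i)
            (ContinuousLinearMap.proj (R := ℝ) (φ := fun _ : Fin n => ℝ) i) (F (a + t • d)) :=
          (ContinuousLinearMap.proj (R := ℝ) (φ := fun _ : Fin n => ℝ) i).hasFDerivAt
        have h5 : HasDerivAt (fun t : ℝ => F (a + t • d) i)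
            (fderiv ℝ F (a + t • d) d i) t := by have := hpi.comp_hasDerivAt t h3; exact this
        exact h5.mul_const (d i)
    simpa [dotProduct] using h4
  have hmvt := exists_hasDerivAt_eq_slope g (fun t => (fderiv ℝ F (a + t • d) d) ⬝ᵥ d)
    (by norm_num : (0:ℝ) < 1)
    (fun t _ => (hdiff t).continuousAt.continuousWithinAt)
    (fun t _ => hdiff t)
  obtain ⟨c, _, hc⟩ := hmvt
  have hg0 : g 0 = g 1 := by
    simp [hg, hd, hab]
  rw [← hg0] at hc
  simp at hc
  have := hJ (a + c • d)
  rw [dotProduct_comm] at hc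
  rw [hc] at this
  have hdd : 0 < d ⬝ᵥ d := by
    have : d ⬝ᵥ d = ∑ i, d i ^ 2 := by simp [dotProduct, sq]
    rw [this]
    apply Finset.sum_pos'
    · intro i _; positivity
    · obtain ⟨i, hi⟩ := Function.ne_iff.mp hdne
      exact ⟨i, Finset.mem_univ i, pow_two_pos_of_ne_zero (by simpa using hi)⟩
  nlinarith
end

section
/- Let F : ℝⁿ → ℝⁿ be a C¹ map with n ≥ 2. Suppose that 0 ∉ Spec(F) and that one of the following holds: (i) every element of Spec(F+F^T) is negative, and there exist M₁, M₂ > 0 such that for every x ∈ ℝⁿ the sum of the eigenvalues of JF(x)+JF(x)^T is greater than −M₁ and the product of their absolute values is greater than M₂; or (ii) every element of Spec(F+F^T) is positive, and there exist M₁, M₂ > 0 such that for every x ∈ ℝⁿ the sum of the eigenvalues of JF(x)+JF(x)^T is less than M₁ and their product is greater than M₂. Then F is injective. -/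
open Matrix

set_option linter.unusedVariables false

lemma quad_pos_aux {n : ℕ} (A : Matrix (Fin n) (Fin n) ℝ) (hA : A.IsHermitian)
    (h : ∀ μ : ℝ, HasRealEigenvalue A μ → 0 < μ) :
    ∀ v : Fin n → ℝ, v ≠ 0 → 0 < v ⬝ᵥ A.mulVec v := by
  intro v hv
  have hev : ∀ i, 0 < hA.eigenvalues i := by
    intro i
    refine h _ ⟨hA.eigenvectorBasis i, ?_, hA.mulVec_eigenvectorBasis i⟩
    have := hA.eigenvectorBasis.toBasis.ne_zero i
    simpa using fun hc => this (by ext j; exact congrFun (congrArg WithLp.ofLp hc) j)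
  have hps : A.PosSemidef := hA.posSemidef_iff_eigenvalues_nonneg.mpr fun i => (hev i).le
  have h0 : 0 ≤ v ⬝ᵥ A.mulVec v := by simpa using hps.re_dotProduct_nonneg v
  rcases h0.lt_or_eq with h' | h'
  · exact h'
  · exfalso
    have hz : A *ᵥ v = 0 := by
      have := (hps.dotProduct_mulVec_zero_iff v).mp (by simpa using h'.symm)
      simpa using this
    exact lt_irrefl _ (h 0 ⟨v, hv, by simpa using hz⟩)

lemma inj_of_pos_aux {n : ℕ} (F : (Fin n → ℝ) → (Fin n → ℝ)) (hF : ContDiff ℝ 1 F)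
    (h : ∀ x v : Fin n → ℝ, v ≠ 0 → 0 < (fderiv ℝ F x v) ⬝ᵥ v) :
    Function.Injective F := by
  intro a b hab
  by_contra hne
  set v := a - b with hvdef
  have hv : v ≠ 0 := sub_ne_zero.mpr hne
  have hφ : ∀ t : ℝ, HasDerivAt (fun t : ℝ => F (b + t • v) ⬝ᵥ v)
      ((fderiv ℝ F (b + t • v) v) ⬝ᵥ v) t := by
    intro t
    have line : HasDerivAt (fun t : ℝ => b + t • v) v t := by
      simpa using ((hasDerivAt_id t).smul_const v).const_add b
    have hG : HasDerivAt (fun t : ℝ => F (b + t • v)) (fderiv ℝ F (b + t • v) v) t :=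
      (hF.differentiable one_ne_zero _).hasFDerivAt.comp_hasDerivAt t line
    simp only [dotProduct]
    refine HasDerivAt.fun_sum fun i _ => ?_
    have hcomp := (ContinuousLinearMap.proj (R := ℝ) (φ := fun _ : Fin n => ℝ)
      i).hasFDerivAt.comp_hasDerivAt t hG
    simpa using hcomp.mul_const (v i)
  have hmono : StrictMono (fun t : ℝ => F (b + t • v) ⬝ᵥ v) :=
    strictMono_of_hasDerivAt_pos hφ (fun t => h _ v hv)
  have h01 := hmono (show (0:ℝ) < 1 by norm_num)
  simp only [zero_smul, add_zero, one_smul] at h01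
  rw [show b + v = a by simp [hvdef], hab] at h01
  exact lt_irrefl _ h01

lemma jac_mulVec {n : ℕ} (F : (Fin n → ℝ) → (Fin n → ℝ)) (x v : Fin n → ℝ) :
    (jacobianMatrix F x) *ᵥ v = fderiv ℝ F x v := by
  rw [jacobianMatrix, ← Matrix.toLin'_apply, Matrix.toLin'_toMatrix']
  rfl

lemma sym_isHermitian {n : ℕ} (J : Matrix (Fin n) (Fin n) ℝ) :
    (J + Jᵀ).IsHermitian := by
  ext i j
  simp [Matrix.conjTranspose_apply, Matrix.transpose_apply, Matrix.add_apply, add_comm]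

lemma quad_sym {n : ℕ} (J : Matrix (Fin n) (Fin n) ℝ) (v : Fin n → ℝ) :
    v ⬝ᵥ (J + Jᵀ) *ᵥ v = 2 * (v ⬝ᵥ J *ᵥ v) := by
  rw [Matrix.add_mulVec, dotProduct_add]
  have : v ⬝ᵥ Jᵀ *ᵥ v = v ⬝ᵥ J *ᵥ v := by
    rw [Matrix.mulVec_transpose, Matrix.dotProduct_mulVec, dotProduct_comm]
  rw [this]; ring


/-- Let `F : ℝⁿ → ℝⁿ` (n ≥ 2) be `C¹` with no complex eigenvalue of `JF(x)`
equal to zero for any `x`. Suppose either (i) every eigenvalue of `JF(x)+JF(x)ᵀ` is negative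
for every `x`, and there are `M₁, M₂ > 0` such that for every `x` the trace (= sum of
eigenvalues) of `JF(x)+JF(x)ᵀ` is greater than `-M₁` and the absolute value of its
determinant (= product of the absolute values of the eigenvalues) is greater than `M₂`;
or (ii) every eigenvalue of `JF(x)+JF(x)ᵀ` is positive for every `x`, and there are
`M₁, M₂ > 0` such that for every `x` the trace of `JF(x)+JF(x)ᵀ` is less than `M₁` and its
determinant (= product of the eigenvalues) is greater than `M₂`. Then `F` is injective. -/
theorem injective_of_nonzero_spec_and_trace_det_bounds
    {n : ℕ} (hn : 2 ≤ n) (F : (Fin n → ℝ) → (Fin n → ℝ)) (hF : ContDiff ℝ 1 F)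
    (hspec : ∀ x : Fin n → ℝ, ∀ μ : ℂ, HasComplexEigenvalue (jacobianMatrix F x) μ → μ ≠ 0)
    (hsym :
      ((∀ x : Fin n → ℝ, ∀ μ : ℝ,
          HasRealEigenvalue (jacobianMatrix F x + (jacobianMatrix F x)ᵀ) μ → μ < 0) ∧
        ∃ M₁ > (0 : ℝ), ∃ M₂ > (0 : ℝ), ∀ x : Fin n → ℝ,
          -M₁ < (jacobianMatrix F x + (jacobianMatrix F x)ᵀ).trace ∧
          M₂ < |(jacobianMatrix F x + (jacobianMatrix F x)ᵀ).det|) ∨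
      ((∀ x : Fin n → ℝ, ∀ μ : ℝ,
          HasRealEigenvalue (jacobianMatrix F x + (jacobianMatrix F x)ᵀ) μ → 0 < μ) ∧
        ∃ M₁ > (0 : ℝ), ∃ M₂ > (0 : ℝ), ∀ x : Fin n → ℝ,
          (jacobianMatrix F x + (jacobianMatrix F x)ᵀ).trace < M₁ ∧
          M₂ < (jacobianMatrix F x + (jacobianMatrix F x)ᵀ).det)) :
    Function.Injective F := by
  rcases hsym with ⟨hneg, -⟩ | ⟨hpos, -⟩
  · -- negative case: apply the positive case to G = -F
    set G : (Fin n → ℝ) → (Fin n → ℝ) := fun x => -(F x) with hGdef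
    have hGc : ContDiff ℝ 1 G := hF.neg
    have hGinj : Function.Injective G := by
      refine inj_of_pos_aux G hGc ?_
      intro x v hv
      have hq : 0 < v ⬝ᵥ (-(jacobianMatrix F x + (jacobianMatrix F x)ᵀ)) *ᵥ v := by
        refine quad_pos_aux _ ?_ ?_ v hv
        · have := sym_isHermitian (jacobianMatrix F x)
          simpa [Matrix.IsHermitian] using congrArg Neg.neg this
        · rintro μ ⟨w, hw, hmul⟩
          have : HasRealEigenvalue (jacobianMatrix F x + (jacobianMatrix F x)ᵀ) (-μ) := by
            refine ⟨w, hw, ?_⟩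
            rw [Matrix.neg_mulVec] at hmul
            rw [neg_smul, ← hmul, neg_neg]
          have := hneg x (-μ) this
          linarith
      rw [Matrix.neg_mulVec, dotProduct_neg, quad_sym, jac_mulVec, dotProduct_comm] at hq
      have hfd : fderiv ℝ G x v = -(fderiv ℝ F x v) := by
        have : fderiv ℝ G x = -(fderiv ℝ F x) := by
          simpa [hGdef] using fderiv_neg (𝕜 := ℝ) (f := F) (x := x)
        simp [this]
      rw [hfd, neg_dotProduct]
      linarith
    intro a b hab
    exact hGinj (by simp [hGdef, hab])
  · refine inj_of_pos_aux F hF ?_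
    intro x v hv
    have hq : 0 < v ⬝ᵥ (jacobianMatrix F x + (jacobianMatrix F x)ᵀ) *ᵥ v :=
      quad_pos_aux _ (sym_isHermitian _) (hpos x) v hv
    rw [quad_sym, jac_mulVec] at hq
    rw [dotProduct_comm] at hq
    linarith
end

section
/- Let F : ℝⁿ → ℝⁿ be a C¹ map with n ≥ 2. Suppose that for every x ∈ ℝⁿ no complex eigenvalue of JF(x) is zero, that every eigenvalue of JF(x)+JF(x)^T is positive for every x, and that there exist M₁, M₂ > 0 such that for every x ∈ ℝⁿ the trace of JF(x)+JF(x)^T is less than M₁ and its determinant is greater than M₂. Then F is injective. -/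
open Matrix

/-- Let `F : ℝⁿ → ℝⁿ` (n ≥ 2) be `C¹` with no complex eigenvalue of `JF(x)`
equal to zero for any `x`. Suppose every eigenvalue of `JF(x)+JF(x)ᵀ` is positive for every
`x`, and there are `M₁, M₂ > 0` such that for every `x` the trace of `JF(x)+JF(x)ᵀ` is
less than `M₁` and its determinant is greater than `M₂`. Then `F` is injective. -/
theorem injective_of_positive_symmetric_spec_trace_det_bounds
    {n : ℕ} (hn : 2 ≤ n) (F : (Fin n → ℝ) → (Fin n → ℝ)) (hF : ContDiff ℝ 1 F)
    (hspec : ∀ x : Fin n → ℝ, ∀ μ : ℂ, HasComplexEigenvalue (jacobianMatrix F x) μ → μ ≠ 0)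
    (hpos : ∀ x : Fin n → ℝ, ∀ μ : ℝ,
        HasRealEigenvalue (jacobianMatrix F x + (jacobianMatrix F x)ᵀ) μ → 0 < μ)
    (hbound : ∃ M₁ > (0 : ℝ), ∃ M₂ > (0 : ℝ), ∀ x : Fin n → ℝ,
        (jacobianMatrix F x + (jacobianMatrix F x)ᵀ).trace < M₁ ∧
        M₂ < (jacobianMatrix F x + (jacobianMatrix F x)ᵀ).det) :
    Function.Injective F := by

  classical
  -- Positive definiteness of the symmetric part
  have key : ∀ x : Fin n → ℝ, ∀ v : Fin n → ℝ, v ≠ 0 →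
      0 < v ⬝ᵥ (jacobianMatrix F x + (jacobianMatrix F x)ᵀ) *ᵥ v := by
    intro x v hv
    set S := jacobianMatrix F x + (jacobianMatrix F x)ᵀ with hS
    have hHerm : S.IsHermitian := by
      ext i j
      simp [hS, Matrix.conjTranspose_apply, Matrix.add_apply, add_comm]
    have heig : ∀ i, 0 < hHerm.eigenvalues i := by
      intro i
      refine hpos x _ ⟨hHerm.eigenvectorBasis i, by simpa using hHerm.eigenvectorBasis.orthonormal.ne_zero i, ?_⟩
      exact hHerm.mulVec_eigenvectorBasis i
    have hPSD : S.PosSemidef := hHerm.posSemidef_iff_eigenvalues_nonneg.mpr fun i => (heig i).le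
    have h0 : 0 ≤ v ⬝ᵥ S *ᵥ v := by simpa using hPSD.dotProduct_mulVec_nonneg v
    rcases h0.lt_or_eq with h | h
    · exact h
    · exfalso
      have hz : S *ᵥ v = 0 := (hPSD.dotProduct_mulVec_zero_iff v).1 (by simpa using h.symm)
      have : (0 : ℝ) < 0 := hpos x 0 ⟨v, hv, by simpa using hz⟩
      exact lt_irrefl _ this
  -- Jacobian acts as the derivative
  have hJ : ∀ x v : Fin n → ℝ, (jacobianMatrix F x) *ᵥ v = fderiv ℝ F x v := by
    intro x v
    have := Matrix.toLin'_toMatrix' (fderiv ℝ F x).toLinearMap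
    calc (jacobianMatrix F x) *ᵥ v
        = Matrix.toLin' (jacobianMatrix F x) v := (Matrix.toLin'_apply _ _).symm
      _ = fderiv ℝ F x v := by rw [jacobianMatrix, this]; rfl
  -- strict positivity of the directional quadratic form
  have quad : ∀ x v : Fin n → ℝ, v ≠ 0 → 0 < fderiv ℝ F x v ⬝ᵥ v := by
    intro x v hv
    have h := key x v hv
    have e : v ⬝ᵥ (jacobianMatrix F x + (jacobianMatrix F x)ᵀ) *ᵥ v
        = 2 * (fderiv ℝ F x v ⬝ᵥ v) := by
      rw [Matrix.add_mulVec, dotProduct_add]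
      rw [Matrix.dotProduct_mulVec v (jacobianMatrix F x)ᵀ v, Matrix.vecMul_transpose]
      rw [hJ, dotProduct_comm]
      ring
    rw [e] at h
    linarith
  intro a b hab
  by_contra hne
  set v := a - b with hvdef
  have hv : v ≠ 0 := sub_ne_zero.mpr hne
  -- g(t) = ⟨F(b + t v) - F b, v⟩
  set g : ℝ → ℝ := fun t => (F (b + t • v) - F b) ⬝ᵥ v with hg
  have hdiff : Differentiable ℝ F := hF.differentiable one_ne_zero
  have hgd : ∀ t : ℝ, HasDerivAt g (fderiv ℝ F (b + t • v) v ⬝ᵥ v) t := by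
    intro t
    have h1 : HasDerivAt (fun t : ℝ => b + t • v) v t := by
      simpa using ((hasDerivAt_id t).smul_const v).const_add b
    have h2 : HasDerivAt (fun t : ℝ => F (b + t • v)) (fderiv ℝ F (b + t • v) v) t :=
      (hdiff (b + t • v)).hasFDerivAt.comp_hasDerivAt t h1
    have h3 : HasDerivAt (fun t : ℝ => F (b + t • v) - F b) (fderiv ℝ F (b + t • v) v) t := by
      simpa using h2.sub_const (F b)
    have h4 : HasDerivAt (fun t : ℝ => (F (b + t • v) - F b) ⬝ᵥ v)
        ((fderiv ℝ F (b + t • v) v) ⬝ᵥ v) t := by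
      simp only [dotProduct, Finset.sum_apply]
      refine HasDerivAt.fun_sum fun i _ => HasDerivAt.mul_const (𝕜 := ℝ) ?_ (v i)
      exact (ContinuousLinearMap.proj i).hasFDerivAt.comp_hasDerivAt t h3
    exact h4
  have hmono : StrictMono g :=
    strictMono_of_deriv_pos fun t => by
      rw [(hgd t).deriv]; exact quad _ v hv
  have h0 : g 0 = 0 := by simp [hg]
  have h1 : g 1 = 0 := by
    have ha : b + (1 : ℝ) • v = a := by simp [hvdef]
    show (F (b + (1 : ℝ) • v) - F b) ⬝ᵥ v = 0
    rw [ha, hab, sub_self, zero_dotProduct]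
  have := hmono (show (0:ℝ) < 1 by norm_num)
  rw [h0, h1] at this
  exact lt_irrefl _ this
end

section
/- Let n ≥ 2 and let G : ℝⁿ → ℝⁿ be a C¹ map such that det JG(X) ≠ 0 for every X ∈ ℝⁿ, G(0) = 0, and G(c) = 0 for some c ≠ 0. Define I(X) = ‖G(X)‖². Then there exist a real number c* > 0 and a sequence (X_k) in ℝⁿ with ‖X_k‖ → ∞, I(X_k) → c*, and ∇I(X_k) = 2 JG(X_k)^T G(X_k) → 0. -/
open Filter Metric Set ContinuousLinearMap
open scoped RealInnerProductSpace

section EkelandWeak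

/-- A weak form of Ekeland's variational principle. -/
theorem ekeland_weak {X : Type*} [MetricSpace X] [CompleteSpace X]
    (f : X → ℝ) (hf : LowerSemicontinuous f) {B : ℝ} (hB : ∀ x, B ≤ f x)
    {ε : ℝ} (hε : 0 < ε) (x₀ : X) :
    ∃ x, f x ≤ f x₀ ∧ ∀ y, f x ≤ f y + ε * dist x y := by
  classical
  set S : X → Set X := fun x => {y | f y + ε * dist x y ≤ f x} with hS
  have hxS : ∀ x, x ∈ S x := fun x => by simp [hS]
  have htrans : ∀ x y, y ∈ S x → S y ⊆ S x := by
    intro x y hy z hz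
    simp only [hS, mem_setOf_eq] at *
    have := dist_triangle x y z
    nlinarith [hz, hy, dist_nonneg (x := x) (y := y)]
  -- the infimum of f on S x
  have hne : ∀ x, (Set.range fun y : S x => f y).Nonempty := fun x => ⟨f x, ⟨⟨x, hxS x⟩, rfl⟩⟩
  have hbdd : ∀ x, BddBelow (Set.range fun y : S x => f y) := fun x =>
    ⟨B, by rintro _ ⟨y, rfl⟩; exact hB y⟩
  set m : X → ℝ := fun x => ⨅ y : S x, f y with hm
  have hm_le : ∀ x, ∀ y ∈ S x, m x ≤ f y := fun x y hy => ciInf_le (hbdd x) ⟨y, hy⟩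
  have hm_le_self : ∀ x, m x ≤ f x := fun x => hm_le x x (hxS x)
  have hnext : ∀ x, ∃ y, y ∈ S x ∧ f y ≤ (f x + m x) / 2 := by
    intro x
    rcases eq_or_lt_of_le (hm_le_self x) with h | h
    · exact ⟨x, hxS x, by linarith⟩
    · haveI : Nonempty (S x) := ⟨⟨x, hxS x⟩⟩
      have hiInf : (⨅ y : S x, f y) < (f x + m x) / 2 := by
        have : m x < (f x + m x) / 2 := by linarith
        exact this
      obtain ⟨⟨y, hy⟩, hfy⟩ := exists_lt_of_ciInf_lt hiInf
      exact ⟨y, hy, hfy.le⟩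
  choose next hnextS hnextf using hnext
  set u : ℕ → X := fun n => next^[n] x₀ with hu
  have hu_succ : ∀ n, u (n + 1) = next (u n) := fun n => Function.iterate_succ_apply' _ _ _
  have huS : ∀ n, u (n + 1) ∈ S (u n) := fun n => (hu_succ n) ▸ hnextS (u n)
  have hfu_succ : ∀ n, f (u (n + 1)) ≤ (f (u n) + m (u n)) / 2 := fun n =>
    (hu_succ n) ▸ hnextf (u n)
  have hanti : Antitone (fun n => f (u n)) := antitone_nat_of_succ_le fun n => by
    have := hfu_succ n; have := hm_le_self (u n); linarith
  have hdistf : ∀ n, ε * dist (u n) (u (n + 1)) ≤ f (u n) - f (u (n + 1)) := by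
    intro n; have := huS n; simp only [hS, mem_setOf_eq] at this; linarith
  set L : ℝ := ⨅ n, f (u n) with hL
  have hbddL : BddBelow (Set.range fun n => f (u n)) := ⟨B, by rintro _ ⟨n, rfl⟩; exact hB _⟩
  have hfL : Tendsto (fun n => f (u n)) atTop (nhds L) := tendsto_atTop_ciInf hanti hbddL
  have hLle : ∀ n, L ≤ f (u n) := fun n => ciInf_le hbddL n
  -- Cauchy
  have hkey : ∀ n m, n ≤ m → dist (u n) (u m) ≤ (f (u n) - f (u m)) / ε := by
    intro n m hnm
    induction m, hnm using Nat.le_induction with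
    | base => simp
    | succ m hnm ih =>
      have h1 := hdistf m
      have h2 := dist_triangle (u n) (u m) (u (m + 1))
      have : dist (u m) (u (m+1)) ≤ (f (u m) - f (u (m+1))) / ε := by
        rw [le_div_iff₀ hε]; linarith
      calc dist (u n) (u (m+1)) ≤ _ + _ := h2
        _ ≤ (f (u n) - f (u m)) / ε + (f (u m) - f (u (m+1))) / ε := add_le_add ih this
        _ = (f (u n) - f (u (m+1))) / ε := by ring
  have hcauchy : CauchySeq u := by
    rw [Metric.cauchySeq_iff']
    intro ε' hε'
    obtain ⟨N, hN⟩ := (Metric.tendsto_atTop.mp hfL) (ε * ε' / 2) (by positivity)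
    refine ⟨N, fun n hn => ?_⟩
    have h1 := hkey N n hn
    have h2 := hN N le_rfl
    have h3 := hLle n
    rw [Real.dist_eq, abs_lt] at h2
    rw [dist_comm]
    calc dist (u N) (u n) ≤ (f (u N) - f (u n)) / ε := h1
      _ < ε' := by rw [div_lt_iff₀ hε]; nlinarith
  obtain ⟨xb, hxb⟩ := cauchySeq_tendsto_of_complete hcauchy
  -- f xb ≤ L
  have hfxb : f xb ≤ L := by
    by_contra h
    push_neg at h
    have hmid : (L + f xb) / 2 < f xb := by linarith
    have h1 : ∀ᶠ n in atTop, (L + f xb) / 2 < f (u n) :=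
      hxb.eventually (hf xb _ hmid)
    have h2 : ∀ᶠ n in atTop, f (u n) < (L + f xb) / 2 :=
      hfL.eventually (eventually_lt_nhds (by linarith : L < (L + f xb) / 2))
    obtain ⟨n, hn1, hn2⟩ := (h1.and h2).exists
    linarith
  -- xb ∈ S (u n) for all n
  have huSmono : ∀ n m, n ≤ m → u m ∈ S (u n) := by
    intro n m hnm
    induction m, hnm using Nat.le_induction with
    | base => exact hxS _
    | succ m hnm ih => exact htrans _ _ ih (huS m)
  have hxbS : ∀ n, xb ∈ S (u n) := by
    intro n
    have hlim : Tendsto (fun k => f (u k) + ε * dist (u n) (u k)) atTop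
        (nhds (L + ε * dist (u n) xb)) :=
      hfL.add ((tendsto_const_nhds.mul ((continuous_dist.comp
        (continuous_const.prodMk continuous_id)).continuousAt.tendsto.comp hxb)))
    have hle : ∀ᶠ k in atTop, f (u k) + ε * dist (u n) (u k) ≤ f (u n) := by
      filter_upwards [eventually_ge_atTop n] with k hk
      exact huSmono n k hk
    have := le_of_tendsto hlim hle
    simp only [hS, mem_setOf_eq]
    have := hfxb
    nlinarith [this]
  -- m (u n) → L
  have hmL : Tendsto (fun n => m (u n)) atTop (nhds L) := by
    have hup : ∀ n, f (u n) - 2 * (f (u n) - f (u (n + 1))) ≤ m (u n) := fun n => by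
      have := hfu_succ n; linarith
    have hlo : ∀ n, m (u n) ≤ f (u n) := fun n => hm_le_self (u n)
    have h1 : Tendsto (fun n => f (u n) - 2 * (f (u n) - f (u (n + 1)))) atTop (nhds L) := by
      have h2 : Tendsto (fun n => f (u (n + 1))) atTop (nhds L) :=
        hfL.comp (tendsto_add_atTop_nat 1)
      have := (hfL.sub ((hfL.sub h2).const_mul 2))
      simpa using this.congr (fun n => by ring)
    exact tendsto_of_tendsto_of_tendsto_of_le_of_le h1 hfL hup hlo
  refine ⟨xb, ?_, ?_⟩
  · exact le_trans hfxb (hLle 0)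
  · intro y
    by_contra h
    push_neg at h
    have hyS : y ∈ S xb := by
      simp only [hS, mem_setOf_eq]
      exact h.le
    have hySn : ∀ n, y ∈ S (u n) := fun n => htrans _ _ (hxbS n) hyS
    have hfy : L ≤ f y := le_of_tendsto hmL (Eventually.of_forall fun n => hm_le _ _ (hySn n))
    have : 0 ≤ ε * dist xb y := mul_nonneg hε.le dist_nonneg
    simp only [hS, mem_setOf_eq] at hyS
    nlinarith [hfxb]

end EkelandWeak

section Derivative

variable {E : Type*} [NormedAddCommGroup E] [InnerProductSpace ℝ E]


theorem hasFDerivAt_norm_sq_comp [CompleteSpace E] (G : E → E) (hG : ContDiff ℝ 1 G) (x : E) :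
    HasFDerivAt (fun y => ‖G y‖ ^ 2)
      (innerSL ℝ ((2 : ℝ) • (ContinuousLinearMap.adjoint (fderiv ℝ G x)) (G x))) x := by
  have hGd : HasFDerivAt G (fderiv ℝ G x) x :=
    (hG.differentiable one_ne_zero x).hasFDerivAt
  have h1 : HasFDerivAt (fun y => ⟪G y, G y⟫)
      ((fderivInnerCLM ℝ (G x, G x)).comp ((fderiv ℝ G x).prod (fderiv ℝ G x))) x :=
    hGd.inner ℝ hGd
  have heq : (fun y => ⟪G y, G y⟫) = fun y => ‖G y‖ ^ 2 := by
    funext y; rw [real_inner_self_eq_norm_sq]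
  rw [heq] at h1
  refine h1.congr_fderiv ?_
  ext v
  simp only [innerSL_apply_apply, fderivInnerCLM_apply, ContinuousLinearMap.comp_apply,
    ContinuousLinearMap.prod_apply]
  rw [real_inner_smul_left, ContinuousLinearMap.adjoint_inner_left]
  rw [real_inner_comm (fderiv ℝ G x v) (G x)]
  ring

theorem key_estimate {f : E → ℝ} {g : E → E}
    (hderiv : ∀ y, HasFDerivAt f (innerSL ℝ (g y)) y)
    {x h : E} {C : ℝ} (hC : ∀ y ∈ segment ℝ x (x + h), ‖g y - g x‖ ≤ C) :
    f (x + h) ≤ f x + ⟪g x, h⟫ + C * ‖h‖ := by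
  set F : E → ℝ := fun y => f y - ⟪g x, y⟫ with hF
  have hFd : ∀ y ∈ segment ℝ x (x + h),
      HasFDerivWithinAt F (innerSL ℝ (g y) - innerSL ℝ (g x)) (segment ℝ x (x + h)) y := by
    intro y _
    exact (((hderiv y).sub ((innerSL ℝ (g x)).hasFDerivAt)).hasFDerivWithinAt)
  have hbound : ∀ y ∈ segment ℝ x (x + h), ‖innerSL ℝ (g y) - innerSL ℝ (g x)‖ ≤ C := by
    intro y hy
    rw [← map_sub]
    rw [innerSL_apply_norm]
    exact hC y hy
  have hmvt := (convex_segment x (x + h)).norm_image_sub_le_of_norm_hasFDerivWithin_le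
    hFd hbound (left_mem_segment ℝ x (x + h)) (right_mem_segment ℝ x (x + h))
  have hdiff : F (x + h) - F x = f (x + h) - f x - ⟪g x, h⟫ := by
    simp only [hF, inner_add_right]; ring
  have habs : |F (x + h) - F x| ≤ C * ‖h‖ := by
    have : (x + h) - x = h := by abel
    rw [← Real.norm_eq_abs]
    simpa [this] using hmvt
  rw [hdiff] at habs
  have := abs_le.mp habs
  linarith [this.2]

end Derivative

set_option maxHeartbeats 4000000 in
theorem aux_main {E : Type*} [NormedAddCommGroup E] [InnerProductSpace ℝ E]
    [FiniteDimensional ℝ E]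
    (G : E → E) (hG : ContDiff ℝ 1 G)
    (hdet : ∀ X : E, LinearMap.det (fderiv ℝ G X).toLinearMap ≠ 0)
    (h0 : G 0 = 0) (c : E) (hc : c ≠ 0) (hGc : G c = 0) :
    ∃ cstar > (0 : ℝ), ∃ X : ℕ → E,
      Tendsto (fun k => ‖X k‖) atTop atTop ∧
      Tendsto (fun k => ‖G (X k)‖ ^ 2) atTop (nhds cstar) ∧
      Tendsto (fun k => (2 : ℝ) •
          (ContinuousLinearMap.adjoint (fderiv ℝ G (X k))) (G (X k))) atTop (nhds 0) := by
  classical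
  haveI : Nontrivial E := nontrivial_of_ne c 0 hc
  set If : E → ℝ := fun x => ‖G x‖ ^ 2 with hIf
  set g : E → E := fun x => (2 : ℝ) • (ContinuousLinearMap.adjoint (fderiv ℝ G x)) (G x) with hg
  have hIc : Continuous If := (hG.continuous.norm).pow 2
  have hIf0 : ∀ x, 0 ≤ If x := fun x => by positivity
  have hg_cont : Continuous g := by
    have h1 : Continuous fun x => fderiv ℝ G x := hG.continuous_fderiv one_ne_zero
    have h2 : Continuous fun x => ContinuousLinearMap.adjoint (fderiv ℝ G x) :=
      (ContinuousLinearMap.adjoint.toContinuousLinearEquiv.continuous).comp h1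
    exact ((h2.clm_apply hG.continuous)).const_smul (2 : ℝ)
  have hderiv : ∀ x, HasFDerivAt If (innerSL ℝ (g x)) x := fun x =>
    hasFDerivAt_norm_sq_comp G hG x
  have hginj : ∀ x : E, g x = 0 → G x = 0 := by
    intro x hx
    have h2 : (ContinuousLinearMap.adjoint (fderiv ℝ G x)) (G x) = 0 := by
      rcases smul_eq_zero.mp hx with h | h
      · norm_num at h
      · exact h
    obtain ⟨w, hw⟩ := (LinearMap.equivOfDetNeZero _ (hdet x)).surjective (G x)
    have hz : ⟪G x, G x⟫ = 0 := by
      have h3 : ⟪G x, fderiv ℝ G x w⟫ = 0 := by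
        rw [← ContinuousLinearMap.adjoint_inner_left, h2, inner_zero_left]
      rwa [show fderiv ℝ G x w = G x from hw] at h3
    exact inner_self_eq_zero.mp hz
  -- small sphere with positive minimum
  have hc' : (0 : ℝ) < ‖c‖ := norm_pos_iff.mpr hc
  obtain ⟨U, hUopen, hU0, hUinj⟩ : ∃ U : Set E, IsOpen U ∧ (0 : E) ∈ U ∧ Set.InjOn G U := by
    have hstrict : HasStrictFDerivAt G (fderiv ℝ G 0) 0 :=
      hG.contDiffAt.hasStrictFDerivAt one_ne_zero
    set el : E ≃ₗ[ℝ] E := LinearMap.equivOfDetNeZero _ (hdet 0) with hel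
    set ec : E ≃L[ℝ] E := el.toContinuousLinearEquiv with hec
    have hcoe : (ec : E →L[ℝ] E) = fderiv ℝ G 0 := by ext v; rfl
    have hstrict' : HasStrictFDerivAt G (ec : E →L[ℝ] E) 0 := by rw [hcoe]; exact hstrict
    set ph := hstrict'.toOpenPartialHomeomorph G with hph
    exact ⟨ph.source, ph.open_source, hstrict'.mem_toOpenPartialHomeomorph_source, ph.injOn⟩
  obtain ⟨r₀, hr₀pos, hball⟩ := Metric.isOpen_iff.mp hUopen 0 hU0
  set r : ℝ := min (r₀ / 2) (‖c‖ / 2) with hr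
  have hrpos : 0 < r := lt_min (by linarith) (by linarith)
  have hrc : r < ‖c‖ := lt_of_le_of_lt (min_le_right _ _) (by linarith)
  have hsub : sphere (0 : E) r ⊆ U := fun x hx => by
    apply hball
    rw [mem_sphere_zero_iff_norm] at hx
    rw [mem_ball_zero_iff, hx]
    exact lt_of_le_of_lt (min_le_left _ _) (by linarith)
  have hsph_ne : ∀ x ∈ sphere (0 : E) r, G x ≠ 0 := by
    intro x hx hzx
    have hxU : x ∈ U := hsub hx
    have hx0 : x = 0 := hUinj hxU hU0 (by rw [hzx, h0])
    rw [mem_sphere_zero_iff_norm, hx0, norm_zero] at hx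
    exact absurd hx.symm (ne_of_gt hrpos)
  obtain ⟨xα, hxα_mem, hxα_min⟩ :=
    (isCompact_sphere (0 : E) r).exists_isMinOn
      (NormedSpace.sphere_nonempty.mpr hrpos.le) hIc.continuousOn
  set α : ℝ := If xα with hα
  have hαpos : 0 < α := by
    have := hsph_ne xα hxα_mem
    have : 0 < ‖G xα‖ := norm_pos_iff.mpr this
    positivity
  -- path space
  set Γs : Set C(unitInterval, E) := {γ | γ 0 = 0 ∧ γ 1 = c} with hΓs
  have hΓclosed : IsClosed Γs := by
    have h1 : IsClosed {γ : C(unitInterval, E) | γ 0 = 0} :=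
      isClosed_singleton.preimage (continuous_eval_const 0)
    have h2 : IsClosed {γ : C(unitInterval, E) | γ 1 = c} :=
      isClosed_singleton.preimage (continuous_eval_const 1)
    exact h1.inter h2
  haveI : CompleteSpace Γs := hΓclosed.completeSpace_coe
  have hγlin : (⟨fun t : unitInterval => (t : ℝ) • c,
      (continuous_subtype_val.smul continuous_const)⟩ : C(unitInterval, E)) ∈ Γs := by
    constructor
    · show ((0 : unitInterval) : ℝ) • c = 0; norm_num
    · show ((1 : unitInterval) : ℝ) • c = c; norm_num
  haveI : Nonempty Γs := ⟨⟨_, hγlin⟩⟩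
  set Φ : Γs → ℝ := fun γ => sSup (Set.range fun t => If ((γ : C(unitInterval, E)) t)) with hΦ
  have hrange_cpt : ∀ γ : C(unitInterval, E), IsCompact (Set.range fun t => If (γ t)) :=
    fun γ => isCompact_range (hIc.comp γ.continuous)
  have hrange_ne : ∀ γ : C(unitInterval, E), (Set.range fun t => If (γ t)).Nonempty :=
    fun γ => Set.range_nonempty _
  have hΦ_mem : ∀ γ : Γs, ∃ t, If ((γ : C(unitInterval, E)) t) = Φ γ := by
    intro γ
    have := (hrange_cpt γ).sSup_mem (hrange_ne γ)
    obtain ⟨t, ht⟩ := this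
    exact ⟨t, ht⟩
  have hΦ_ge : ∀ (γ : Γs) (t : unitInterval), If ((γ : C(unitInterval, E)) t) ≤ Φ γ :=
    fun γ t => le_csSup (hrange_cpt _).bddAbove (Set.mem_range_self t)
  have hΦ_lsc : LowerSemicontinuous Φ := by
    intro γ y hy
    obtain ⟨t, ht⟩ := hΦ_mem γ
    rw [← ht] at hy
    have hcont : Continuous fun γ' : Γs => If ((γ' : C(unitInterval, E)) t) :=
      hIc.comp ((continuous_eval_const t).comp continuous_subtype_val)
    have := hcont.continuousAt (x := γ) (Ioi_mem_nhds hy)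
    filter_upwards [this] with γ' hγ'
    exact lt_of_lt_of_le hγ' (hΦ_ge γ' t)
  have hΦ_lb : ∀ γ : Γs, α ≤ Φ γ := by
    intro γ
    have hf : Continuous fun t : unitInterval => ‖(γ : C(unitInterval, E)) t‖ :=
      (γ : C(unitInterval, E)).continuous.norm
    have h0' : ‖(γ : C(unitInterval, E)) 0‖ = 0 := by rw [γ.2.1]; simp
    have h1' : ‖(γ : C(unitInterval, E)) 1‖ = ‖c‖ := by rw [γ.2.2]
    have hmem : r ∈ Set.Icc ‖(γ : C(unitInterval, E)) 0‖ ‖(γ : C(unitInterval, E)) 1‖ := by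
      rw [h0', h1']; exact ⟨hrpos.le, hrc.le⟩
    obtain ⟨t, ht⟩ := intermediate_value_univ (0 : unitInterval) 1 hf hmem
    have hts : (γ : C(unitInterval, E)) t ∈ sphere (0 : E) r := by
      rw [mem_sphere_zero_iff_norm]; exact ht
    calc α ≤ If ((γ : C(unitInterval, E)) t) := hxα_min hts
      _ ≤ Φ γ := hΦ_ge γ t
  set cstar : ℝ := ⨅ γ : Γs, Φ γ with hcstar
  have hΦbdd : BddBelow (Set.range Φ) := ⟨α, by rintro _ ⟨γ, rfl⟩; exact hΦ_lb γ⟩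
  have hcstar_pos : 0 < cstar := lt_of_lt_of_le hαpos (le_ciInf hΦ_lb)
  have hcstar_le : ∀ γ : Γs, cstar ≤ Φ γ := fun γ => ciInf_le hΦbdd γ
  -- key step
  have key : ∀ ε : ℝ, 0 < ε → ∃ x : E, cstar ≤ If x ∧ If x ≤ cstar + ε ∧ ‖g x‖ ≤ ε := by
    intro ε hε
    obtain ⟨γ₀, hγ₀⟩ : ∃ γ₀ : Γs, Φ γ₀ < cstar + ε := exists_lt_of_ciInf_lt (by linarith)
    obtain ⟨γ, hγle, hek⟩ := ekeland_weak Φ hΦ_lsc hΦ_lb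
      (show (0 : ℝ) < ε / 4 by positivity) γ₀
    set γc : C(unitInterval, E) := (γ : C(unitInterval, E)) with hγc
    by_cases hmaxcase : ∃ t, If (γc t) = Φ γ ∧ ‖g (γc t)‖ ≤ ε
    · obtain ⟨t, ht1, ht2⟩ := hmaxcase
      exact ⟨γc t, by rw [ht1]; exact hcstar_le γ, by rw [ht1]; linarith, ht2⟩
    exfalso
    push_neg at hmaxcase
    have hΦpos : 0 < Φ γ := lt_of_lt_of_le hαpos (hΦ_lb γ)
    obtain ⟨δ, hδpos, hδΦ, hδ⟩ : ∃ δ > 0, δ ≤ Φ γ ∧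
        ∀ t, Φ γ - δ < If (γc t) → ε < ‖g (γc t)‖ := by
      set Cs : Set unitInterval := {t | ‖g (γc t)‖ ≤ ε} with hCs
      have hCclosed : IsClosed Cs :=
        isClosed_le ((hg_cont.comp γc.continuous).norm) continuous_const
      rcases Cs.eq_empty_or_nonempty with hCe | hCne
      · refine ⟨Φ γ / 2, by linarith, by linarith, fun t _ => ?_⟩
        by_contra hle
        push_neg at hle
        have htC : t ∈ Cs := hle
        rw [hCe] at htC
        exact htC
      · obtain ⟨t₁, ht₁C, ht₁max⟩ := hCclosed.isCompact.exists_isMaxOn hCne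
          (hIc.comp γc.continuous).continuousOn
        have hM'lt : If (γc t₁) < Φ γ := by
          rcases lt_or_eq_of_le (hΦ_ge γ t₁) with h | h
          · exact h
          · exact absurd ht₁C (not_le.mpr (hmaxcase t₁ h))
        refine ⟨min (Φ γ - If (γc t₁)) (Φ γ / 2),
          lt_min (by linarith) (by linarith),
          le_trans (min_le_right _ _) (by linarith), fun t hlt => ?_⟩
        have hMlt : If (γc t₁) < If (γc t) := by
          have := min_le_left (Φ γ - If (γc t₁)) (Φ γ / 2)
          linarith
        by_contra hle
        push_neg at hle
        have := ht₁max (show t ∈ Cs from hle)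
        simp only [Function.comp] at this
        exact absurd hMlt (not_lt.mpr this)
    -- uniform continuity of g near the path
    have hKcpt : IsCompact (cthickening 1 (Set.range γc)) :=
      (isCompact_range γc.continuous).cthickening
    have hgu : UniformContinuousOn g (cthickening 1 (Set.range γc)) :=
      hKcpt.uniformContinuousOn_of_continuous hg_cont.continuousOn
    obtain ⟨d₁, hd₁pos, hd₁⟩ := (Metric.uniformContinuousOn_iff.mp hgu) (ε / 4) (by positivity)
    set s₀ : ℝ := min (min (d₁ / 2) 1) (δ / (2 * ε)) with hs₀
    have hs₀pos : 0 < s₀ := lt_min (lt_min (by linarith) one_pos) (by positivity)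
    have hs₀1 : s₀ ≤ 1 := le_trans (min_le_left _ _) (min_le_right _ _)
    have hs₀d : s₀ ≤ d₁ / 2 := le_trans (min_le_left _ _) (min_le_left _ _)
    have hs₀δ : s₀ ≤ δ / (2 * ε) := min_le_right _ _
    have hTaylor : ∀ (t : unitInterval) (h : E), ‖h‖ ≤ s₀ →
        If (γc t + h) ≤ If (γc t) + ⟪g (γc t), h⟫ + (ε / 4) * ‖h‖ := by
      intro t h hh
      apply key_estimate hderiv
      intro y hy
      rw [segment_eq_image'] at hy
      obtain ⟨θ, hθ, rfl⟩ := hy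
      have hsub2 : γc t + θ • (γc t + h - γc t) - γc t = θ • h := by
        rw [add_sub_cancel_left, add_sub_cancel_left]
      have hdy : dist (γc t + θ • (γc t + h - γc t)) (γc t) ≤ ‖h‖ := by
        rw [dist_eq_norm, hsub2, norm_smul, Real.norm_eq_abs, abs_of_nonneg hθ.1]
        nlinarith [norm_nonneg h, hθ.2]
      have hyK : γc t + θ • (γc t + h - γc t) ∈ cthickening 1 (Set.range γc) :=
        mem_cthickening_of_dist_le _ (γc t) 1 _ (Set.mem_range_self t)
          (le_trans hdy (le_trans hh hs₀1))
      have htK : γc t ∈ cthickening 1 (Set.range γc) :=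
        self_subset_cthickening _ (Set.mem_range_self t)
      have := hd₁ _ hyK _ htK (lt_of_le_of_lt (le_trans hdy (le_trans hh hs₀d)) (by linarith))
      rw [dist_eq_norm] at this
      exact this.le
    -- cutoff function and vector field
    set χ : unitInterval → ℝ := fun t => max 0 (min 1 ((If (γc t) - Φ γ + δ) * (2 / δ))) with hχ
    have hχcont : Continuous χ := by
      apply continuous_const.max
      apply continuous_const.min
      exact (((hIc.comp γc.continuous).sub continuous_const).add continuous_const).mul
        continuous_const
    have hχ0le : ∀ t, 0 ≤ χ t := fun t => le_max_left _ _
    have hχle1 : ∀ t, χ t ≤ 1 := fun t => max_le zero_le_one (min_le_left _ _)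
    have hχzero : ∀ t, If (γc t) ≤ Φ γ - δ → χ t = 0 := by
      intro t h
      apply max_eq_left
      refine le_trans (min_le_right _ _) ?_
      apply mul_nonpos_of_nonpos_of_nonneg (by linarith) (by positivity)
    have hχone : ∀ t, Φ γ - δ / 2 ≤ If (γc t) → χ t = 1 := by
      intro t h
      have h1 : (1 : ℝ) ≤ (If (γc t) - Φ γ + δ) * (2 / δ) := by
        have h2 : δ / 2 ≤ If (γc t) - Φ γ + δ := by linarith
        calc (1 : ℝ) = (δ / 2) * (2 / δ) := by field_simp
          _ ≤ _ := mul_le_mul_of_nonneg_right h2 (by positivity)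
      show max 0 (min 1 ((If (γc t) - Φ γ + δ) * (2 / δ))) = 1
      rw [min_eq_left h1, max_eq_right zero_le_one]
    set w : unitInterval → E := fun t => (max ε ‖g (γc t)‖)⁻¹ • g (γc t) with hw
    have hwd : ∀ t, (0:ℝ) < max ε ‖g (γc t)‖ := fun t => lt_of_lt_of_le hε (le_max_left _ _)
    have hwcont : Continuous w := by
      apply Continuous.smul ?_ (hg_cont.comp γc.continuous)
      exact (continuous_const.max (hg_cont.comp γc.continuous).norm).inv₀
        (fun t => ne_of_gt (hwd t))
    have hwnorm : ∀ t, ‖w t‖ ≤ 1 := by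
      intro t
      rw [hw]
      simp only []
      rw [norm_smul, norm_inv, Real.norm_eq_abs, abs_of_pos (hwd t)]
      calc (max ε ‖g (γc t)‖)⁻¹ * ‖g (γc t)‖
          ≤ (max ε ‖g (γc t)‖)⁻¹ * max ε ‖g (γc t)‖ := by
            gcongr; exact le_max_right _ _
        _ = 1 := inv_mul_cancel₀ (ne_of_gt (hwd t))
    have hwip : ∀ t, 0 ≤ ⟪g (γc t), w t⟫ := by
      intro t
      rw [hw]
      simp only []
      rw [real_inner_smul_right]
      exact mul_nonneg (inv_nonneg.mpr (hwd t).le) real_inner_self_nonneg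
    have hwip1 : ∀ t, ε < ‖g (γc t)‖ → ε ≤ ⟪g (γc t), w t⟫ := by
      intro t hgl
      rw [hw]
      simp only []
      rw [real_inner_smul_right, max_eq_right hgl.le, real_inner_self_eq_norm_sq]
      have hgne : ‖g (γc t)‖ ≠ 0 := ne_of_gt (lt_trans hε hgl)
      rw [pow_two, ← mul_assoc, inv_mul_cancel₀ hgne, one_mul]
      exact hgl.le
    -- the deformed path
    have hγscont : Continuous (fun t => γc t - (s₀ * χ t) • w t) :=
      γc.continuous.sub ((continuous_const.mul hχcont).smul hwcont)
    set γd : C(unitInterval, E) := ⟨fun t => γc t - (s₀ * χ t) • w t, hγscont⟩ with hγd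
    have hγdapp : ∀ t, γd t = γc t - (s₀ * χ t) • w t := fun t => rfl
    have hγdmem : γd ∈ Γs := by
      have hbig : Φ γ - δ ≥ 0 := by linarith
      constructor
      · show γc 0 - (s₀ * χ 0) • w 0 = 0
        have h00 : γc 0 = 0 := γ.2.1
        have hI0 : If (γc 0) = 0 := by rw [h00, hIf]; simp [h0]
        rw [hχzero 0 (by linarith), h00]
        simp
      · show γc 1 - (s₀ * χ 1) • w 1 = c
        have h11 : γc 1 = c := γ.2.2
        have hI1 : If (γc 1) = 0 := by rw [h11, hIf]; simp [hGc]
        rw [hχzero 1 (by linarith), h11]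
        simp
    set γS : Γs := ⟨γd, hγdmem⟩ with hγS
    have hhn : ∀ t, ‖-((s₀ * χ t) • w t)‖ ≤ s₀ := by
      intro t
      rw [norm_neg, norm_smul, Real.norm_eq_abs,
        abs_of_nonneg (mul_nonneg hs₀pos.le (hχ0le t))]
      calc s₀ * χ t * ‖w t‖ ≤ s₀ * 1 * 1 := by
            apply mul_le_mul (by nlinarith [hχle1 t]) (hwnorm t) (norm_nonneg _)
              (by nlinarith)
        _ = s₀ := by ring
    have hdistγ : dist γS γ ≤ s₀ := by
      have hpt : ∀ t, dist (γd t) (γc t) ≤ s₀ := by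
        intro t
        rw [dist_eq_norm, hγdapp t]
        have : γc t - (s₀ * χ t) • w t - γc t = -((s₀ * χ t) • w t) := by abel
        rw [this]
        exact hhn t
      have h1 : dist γd γc ≤ s₀ := (ContinuousMap.dist_le hs₀pos.le).mpr hpt
      rw [Subtype.dist_eq]
      exact h1
    have hest : ∀ t, If (γd t) ≤ Φ γ - (ε / 2) * s₀ := by
      intro t
      have hγdt : γd t = γc t + (-((s₀ * χ t) • w t)) := by rw [hγdapp t]; abel
      have hT := hTaylor t _ (hhn t)
      rw [← hγdt] at hT
      have hip : ⟪g (γc t), -((s₀ * χ t) • w t)⟫ = -(s₀ * χ t) * ⟪g (γc t), w t⟫ := by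
        rw [inner_neg_right, real_inner_smul_right]
        ring
      have hIle : If (γc t) ≤ Φ γ := hΦ_ge γ t
      by_cases hcase : Φ γ - δ / 2 ≤ If (γc t)
      · have hχt : χ t = 1 := hχone t hcase
        have hgl : ε < ‖g (γc t)‖ := hδ t (by linarith)
        have hipge : ε ≤ ⟪g (γc t), w t⟫ := hwip1 t hgl
        rw [hip] at hT
        have h2 : -(s₀ * χ t) * ⟪g (γc t), w t⟫ ≤ -(s₀ * ε) := by
          rw [hχt]
          nlinarith [hs₀pos.le]
        have hn4 : (ε / 4) * ‖-((s₀ * χ t) • w t)‖ ≤ (ε / 4) * s₀ := by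
          apply mul_le_mul_of_nonneg_left (hhn t) (by positivity)
        nlinarith [mul_pos hε hs₀pos]
      · push_neg at hcase
        rw [hip] at hT
        have h1 : -(s₀ * χ t) * ⟪g (γc t), w t⟫ ≤ 0 := by
          have hnn := mul_nonneg (mul_nonneg hs₀pos.le (hχ0le t)) (hwip t)
          nlinarith [hnn]
        have hn4 : (ε / 4) * ‖-((s₀ * χ t) • w t)‖ ≤ (ε / 4) * s₀ := by
          apply mul_le_mul_of_nonneg_left (hhn t) (by positivity)
        have hs₀δ2 : (3 / 4 : ℝ) * ε * s₀ ≤ δ / 2 := by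
          rw [le_div_iff₀ (by positivity : (0:ℝ) < 2 * ε)] at hs₀δ
          nlinarith
        nlinarith
    have hΦest : Φ γS ≤ Φ γ - (ε / 2) * s₀ := by
      apply csSup_le (hrange_ne γd)
      rintro _ ⟨t, rfl⟩
      exact hest t
    have hekS := hek γS
    rw [dist_comm] at hekS
    nlinarith [hs₀pos, hε]
  -- assemble
  have hseq : ∀ k : ℕ, ∃ x : E, cstar ≤ If x ∧ If x ≤ cstar + 1 / (k + 1) ∧
      ‖g x‖ ≤ 1 / (k + 1) := fun k => key _ (by positivity)
  choose X hX1 hX2 hX3 using hseq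
  have hinv : Tendsto (fun k : ℕ => 1 / ((k : ℝ) + 1)) atTop (nhds 0) :=
    tendsto_one_div_add_atTop_nhds_zero_nat
  have hItend : Tendsto (fun k => If (X k)) atTop (nhds cstar) := by
    have hup : Tendsto (fun k : ℕ => cstar + 1 / ((k : ℝ) + 1)) atTop (nhds cstar) := by
      have := tendsto_const_nhds (x := cstar) (f := atTop (α := ℕ)) |>.add hinv
      simpa using this
    exact tendsto_of_tendsto_of_tendsto_of_le_of_le tendsto_const_nhds hup hX1 hX2
  have hgtend : Tendsto (fun k => g (X k)) atTop (nhds 0) :=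
    squeeze_zero_norm hX3 hinv
  have hnorm_tend : Tendsto (fun k => ‖X k‖) atTop atTop := by
    by_contra hnot
    rw [Filter.tendsto_atTop] at hnot
    push_neg at hnot
    obtain ⟨b, hb⟩ := hnot
    have hfreq : ∃ᶠ k in atTop, ‖X k‖ < b := by
      exact hb
    obtain ⟨φ, hφmono, hφ⟩ := Filter.extraction_of_frequently_atTop hfreq
    have hmem : ∀ k, X (φ k) ∈ closedBall (0 : E) b := fun k => by
      rw [mem_closedBall_zero_iff]; exact (hφ k).le
    obtain ⟨xb, _, ψ, hψmono, hψ⟩ :=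
      (isCompact_closedBall (0 : E) b).tendsto_subseq hmem
    have hsub : Tendsto (fun k => φ (ψ k)) atTop atTop :=
      (hφmono.comp hψmono).tendsto_atTop
    have hI1 : Tendsto (fun k => If (X (φ (ψ k)))) atTop (nhds (If xb)) :=
      (hIc.continuousAt.tendsto).comp hψ
    have hI2 : Tendsto (fun k => If (X (φ (ψ k)))) atTop (nhds cstar) :=
      hItend.comp hsub
    have hIxb : If xb = cstar := tendsto_nhds_unique hI1 hI2
    have hg1 : Tendsto (fun k => g (X (φ (ψ k)))) atTop (nhds (g xb)) :=
      (hg_cont.continuousAt.tendsto).comp hψ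
    have hg2 : Tendsto (fun k => g (X (φ (ψ k)))) atTop (nhds 0) :=
      hgtend.comp hsub
    have hgxb : g xb = 0 := tendsto_nhds_unique hg1 hg2
    have hGxb : G xb = 0 := hginj xb hgxb
    have : If xb = 0 := by rw [hIf]; simp [hGxb]
    rw [hIxb] at this
    exact absurd this (ne_of_gt hcstar_pos)
  exact ⟨cstar, hcstar_pos, X, hnorm_tend, hItend, hgtend⟩


/-- Let `G : ℝⁿ → ℝⁿ` (n ≥ 2) be `C¹` with `det JG(X) ≠ 0` for every `X`,
`G(0) = 0` and `G(c) = 0` for some `c ≠ 0`. Set `I(X) = ‖G(X)‖²`. Then there exist `c* > 0`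
and a sequence `(X_k)` with `‖X_k‖ → ∞`, `I(X_k) → c*`, and
`∇I(X_k) = 2 JG(X_k)ᵀ G(X_k) → 0` (here `JG(X)ᵀ G(X)` is the adjoint of the derivative of
`G` at `X` applied to `G(X)`). -/
theorem exists_unbounded_palais_smale_sequence
    {n : ℕ} (hn : 2 ≤ n) (G : EuclideanSpace ℝ (Fin n) → EuclideanSpace ℝ (Fin n))
    (hG : ContDiff ℝ 1 G)
    (hdet : ∀ X : EuclideanSpace ℝ (Fin n), LinearMap.det (fderiv ℝ G X).toLinearMap ≠ 0)
    (h0 : G 0 = 0) (c : EuclideanSpace ℝ (Fin n)) (hc : c ≠ 0) (hGc : G c = 0) :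
    ∃ cstar > (0 : ℝ), ∃ X : ℕ → EuclideanSpace ℝ (Fin n),
      Tendsto (fun k => ‖X k‖) atTop atTop ∧
      Tendsto (fun k => ‖G (X k)‖ ^ 2) atTop (nhds cstar) ∧
      Tendsto (fun k => (2 : ℝ) •
          (ContinuousLinearMap.adjoint (fderiv ℝ G (X k))) (G (X k))) atTop (nhds 0) :=
  aux_main G hG hdet h0 c hc hGc
end

section
/- Let G : ℝⁿ → ℝⁿ be a C¹ map, let c* > 0, and let (X_k) be a sequence in ℝⁿ such that ‖G(X_k)‖² → c* and the gradient ∇I(X_k) of I(X) = ‖G(X)‖² at X_k tends to 0. For each k let μ₁(X_k) denote the smallest eigenvalue of the real symmetric matrix JG(X_k) + JG(X_k)^T. Then limsup_{k→∞} μ₁(X_k) ≤ 0; in particular, for every ε > 0 there are infinitely many k with μ₁(X_k) < ε. -/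
open Filter

open scoped RealInnerProductSpace

lemma rayleigh_lower_aux {n : ℕ} (T : EuclideanSpace ℝ (Fin n) →L[ℝ] EuclideanSpace ℝ (Fin n))
    (hT : LinearMap.IsSymmetric (T : EuclideanSpace ℝ (Fin n) →ₗ[ℝ] EuclideanSpace ℝ (Fin n)))
    (μ : ℝ)
    (hmin : ∀ ν : ℝ, (∃ v : EuclideanSpace ℝ (Fin n), v ≠ 0 ∧ T v = ν • v) → μ ≤ ν)
    (Y : EuclideanSpace ℝ (Fin n)) : μ * ‖Y‖ ^ 2 ≤ ⟪T Y, Y⟫ := by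
  have hfin : Module.finrank ℝ (EuclideanSpace ℝ (Fin n)) = n := finrank_euclideanSpace_fin
  set b := hT.eigenvectorBasis hfin with hb
  set ν := hT.eigenvalues hfin with hν
  have happ : ∀ i, T (b i) = ν i • b i := fun i => hT.apply_eigenvectorBasis hfin i
  have hμν : ∀ i, μ ≤ ν i := fun i =>
    hmin (ν i) ⟨b i, b.toBasis.ne_zero i, happ i⟩
  have h1 : ⟪T Y, Y⟫ = ∑ i, ν i * (⟪b i, Y⟫ * ⟪b i, Y⟫) := by
    rw [← b.sum_inner_mul_inner (T Y) Y]
    refine Finset.sum_congr rfl fun i _ => ?_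
    have hsymi := hT Y (b i)
    simp only [ContinuousLinearMap.coe_coe] at hsymi
    rw [hsymi, happ i, real_inner_smul_right, real_inner_comm Y (b i)]
    ring
  have h2 : ‖Y‖ ^ 2 = ∑ i, ⟪b i, Y⟫ * ⟪b i, Y⟫ := by
    rw [← real_inner_self_eq_norm_sq, ← b.sum_inner_mul_inner Y Y]
    refine Finset.sum_congr rfl fun i _ => ?_
    rw [real_inner_comm Y (b i)]
  rw [h1, h2, Finset.mul_sum]
  exact Finset.sum_le_sum fun i _ =>
    mul_le_mul_of_nonneg_right (hμν i) (mul_self_nonneg _)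

/-- Let `G : ℝⁿ → ℝⁿ` be `C¹`, `c* > 0`, and `(X_k)` a sequence with
`‖G(X_k)‖² → c*` and `∇I(X_k) = 2 JG(X_k)ᵀ G(X_k) → 0`, where `I(X) = ‖G(X)‖²`.
If `μ₁(X_k)` denotes the smallest eigenvalue of the symmetric operator
`JG(X_k) + JG(X_k)ᵀ` (the derivative of `G` at `X_k` plus its adjoint), then
`limsup μ₁(X_k) ≤ 0`; in particular for every `ε > 0` there are infinitely many `k` with
`μ₁(X_k) < ε`. -/
theorem limsup_smallest_eigenvalue_nonpos
    {n : ℕ} (G : EuclideanSpace ℝ (Fin n) → EuclideanSpace ℝ (Fin n))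
    (hG : ContDiff ℝ 1 G) (cstar : ℝ) (hcstar : 0 < cstar)
    (X : ℕ → EuclideanSpace ℝ (Fin n))
    (hI : Tendsto (fun k => ‖G (X k)‖ ^ 2) atTop (nhds cstar))
    (hgrad : Tendsto (fun k => (2 : ℝ) •
        (ContinuousLinearMap.adjoint (fderiv ℝ G (X k))) (G (X k))) atTop (nhds 0))
    (μ : ℕ → ℝ)
    (hμ : ∀ k : ℕ,
      (∃ v : EuclideanSpace ℝ (Fin n), v ≠ 0 ∧
        (fderiv ℝ G (X k)) v + (ContinuousLinearMap.adjoint (fderiv ℝ G (X k))) v = μ k • v) ∧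
      (∀ ν : ℝ, (∃ v : EuclideanSpace ℝ (Fin n), v ≠ 0 ∧
          (fderiv ℝ G (X k)) v + (ContinuousLinearMap.adjoint (fderiv ℝ G (X k))) v = ν • v) →
        μ k ≤ ν)) :
    Filter.limsup μ atTop ≤ 0 ∧ ∀ ε > (0 : ℝ), {k : ℕ | μ k < ε}.Infinite := by
  set g : ℕ → EuclideanSpace ℝ (Fin n) := fun k =>
    (2 : ℝ) • (ContinuousLinearMap.adjoint (fderiv ℝ G (X k))) (G (X k)) with hg
  -- the inner product ⟪g k, G (X k)⟫ tends to 0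
  have hnormg : Tendsto (fun k => ‖g k‖) atTop (nhds 0) := by
    simpa using hgrad.norm
  have hnormY : Tendsto (fun k => ‖G (X k)‖) atTop (nhds (Real.sqrt cstar)) := by
    have h := (Real.continuous_sqrt.tendsto cstar).comp hI
    exact h.congr fun k => Real.sqrt_sq (norm_nonneg _)
  have hprod : Tendsto (fun k => ‖g k‖ * ‖G (X k)‖) atTop (nhds 0) := by
    simpa using hnormg.mul hnormY
  have hinner : Tendsto (fun k => ⟪g k, G (X k)⟫) atTop (nhds 0) :=
    squeeze_zero_norm (fun k => by
      simpa [Real.norm_eq_abs] using abs_real_inner_le_norm (g k) (G (X k))) hprod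
  -- key: for all ε > 0, eventually μ k ≤ ε
  have key : ∀ ε : ℝ, 0 < ε → ∀ᶠ k in atTop, μ k ≤ ε := by
    intro ε hε
    have e1 : ∀ᶠ k in atTop, ⟪g k, G (X k)⟫ < ε * (cstar / 2) :=
      hinner.eventually_lt_const (by positivity)
    have e2 : ∀ᶠ k in atTop, cstar / 2 < ‖G (X k)‖ ^ 2 :=
      hI.eventually_const_lt (by linarith)
    filter_upwards [e1, e2] with k h1 h2
    set T : EuclideanSpace ℝ (Fin n) →L[ℝ] EuclideanSpace ℝ (Fin n) :=
      fderiv ℝ G (X k) + ContinuousLinearMap.adjoint (fderiv ℝ G (X k)) with hT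
    have hsym : LinearMap.IsSymmetric
        (T : EuclideanSpace ℝ (Fin n) →ₗ[ℝ] EuclideanSpace ℝ (Fin n)) := by
      intro x y
      simp only [ContinuousLinearMap.coe_coe, hT, ContinuousLinearMap.add_apply,
        inner_add_left, inner_add_right,
        ContinuousLinearMap.adjoint_inner_left, ContinuousLinearMap.adjoint_inner_right]
      ring
    have hmin : ∀ ν : ℝ, (∃ v : EuclideanSpace ℝ (Fin n), v ≠ 0 ∧ T v = ν • v) → μ k ≤ ν := by
      intro ν ⟨v, hv0, hveq⟩
      exact (hμ k).2 ν ⟨v, hv0, by simpa [hT, ContinuousLinearMap.add_apply] using hveq⟩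
    have hray := rayleigh_lower_aux T hsym (μ k) hmin (G (X k))
    have hTY : ⟪T (G (X k)), G (X k)⟫ = ⟪g k, G (X k)⟫ := by
      simp only [hT, hg, ContinuousLinearMap.add_apply, inner_add_left,
        inner_smul_left, RCLike.conj_to_real]
      rw [ContinuousLinearMap.adjoint_inner_left,
        real_inner_comm (fderiv ℝ G (X k) (G (X k))) (G (X k))]
      ring
    have hfinal : μ k * ‖G (X k)‖ ^ 2 ≤ ε * ‖G (X k)‖ ^ 2 := by
      have : μ k * ‖G (X k)‖ ^ 2 ≤ ε * (cstar / 2) := by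
        rw [hTY] at hray; linarith
      nlinarith
    have hpos : 0 < ‖G (X k)‖ ^ 2 := by linarith
    exact le_of_mul_le_mul_right (by linarith [hfinal]) hpos
  constructor
  · rw [Filter.limsup_eq]
    by_cases hbdd : BddBelow {a : ℝ | ∀ᶠ k in atTop, μ k ≤ a}
    · refine le_of_forall_pos_le_add fun ε hε => ?_
      have : sInf {a : ℝ | ∀ᶠ k in atTop, μ k ≤ a} ≤ ε := csInf_le hbdd (key ε hε)
      linarith
    · rw [Real.sInf_of_not_bddBelow hbdd]
  · intro ε hε
    obtain ⟨N, hN⟩ := (key (ε / 2) (by linarith)).exists_forall_of_atTop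
    refine Set.Infinite.mono ?_ (Set.Ici_infinite N)
    intro k hk
    exact lt_of_le_of_lt (hN k hk) (by linarith)
end
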